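/- Suppose there exists a ∈ (0,∞) with q₀(a) > 0. Then the equation −y′ + qy = f is separable in L_1(ℝ): for every f ∈ L_1(ℝ), the unique solution y ∈ L_1(ℝ) satisfies ∫_ℝ |y′(x)| dx + ∫_ℝ q(x)|y(x)| dx ≤ 3 ∫_ℝ |f(x)| dx. -/

import Mathlib

open MeasureTheory Filter Topology
open scoped ENNReal

/-- `y` is a solution of `-y' + q y = f` on `ℝ`: it is locally absolutely
continuous and its a.e. derivative `y'` equals `q y - f`.  In particular the
a.e. derivative of `y` is the function `t ↦ q t * y t - f t`. -/
def IsSolution (q f y : ℝ → ℝ) : Prop :=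
  LocallyIntegrable (fun t => q t * y t - f t) volume ∧
  ∀ a b : ℝ, y b - y a = ∫ t in a..b, (q t * y t - f t)

lemma sgn_aux (u v : ℝ) : |v| - 2*|v - u| ≤ Real.sign u * v := by
  rcases lt_trichotomy u 0 with h | h | h
  · rw [Real.sign_of_neg h]
    rcases abs_cases v with ⟨h1, h2⟩ | ⟨h1, h2⟩ <;>
      rcases abs_cases (v - u) with ⟨h3, h4⟩ | ⟨h3, h4⟩ <;> linarith
  · subst h; rw [Real.sign_zero]
    rcases abs_cases v with ⟨h1, h2⟩ | ⟨h1, h2⟩ <;>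
      rcases abs_cases (v - 0) with ⟨h3, h4⟩ | ⟨h3, h4⟩ <;> linarith
  · rw [Real.sign_of_pos h]
    rcases abs_cases v with ⟨h1, h2⟩ | ⟨h1, h2⟩ <;>
      rcases abs_cases (v - u) with ⟨h3, h4⟩ | ⟨h3, h4⟩ <;> linarith

lemma sgn_abs_le (u : ℝ) : |Real.sign u| ≤ 1 := by
  rcases lt_trichotomy u 0 with h | h | h <;>
    simp [Real.sign_of_neg, Real.sign_of_pos, Real.sign_zero, h, abs_le]

lemma sgn_mul_le_abs (u v : ℝ) : Real.sign u * v ≤ |v| := by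
  calc Real.sign u * v ≤ |Real.sign u * v| := le_abs_self _
    _ = |Real.sign u| * |v| := abs_mul _ _
    _ ≤ 1 * |v| := by have := sgn_abs_le u; have := abs_nonneg v; nlinarith
    _ = |v| := one_mul _

lemma sgn_mul_self (u : ℝ) : Real.sign u * u = |u| := by
  rcases lt_trichotomy u 0 with h | h | h
  · rw [Real.sign_of_neg h, abs_of_neg h]; ring
  · simp [h]
  · rw [Real.sign_of_pos h, abs_of_pos h]; ring

lemma le_of_forall_eps {A B : ℝ} (h : ∀ ε : ℝ, 0 < ε → A ≤ B + ε) : A ≤ B := by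
  by_contra hc
  push_neg at hc
  have := h ((A - B)/2) (by linarith)
  linarith

lemma key_interval (q f y : ℝ → ℝ) (hq : ∀ x, 0 ≤ q x)
    (hqloc : LocallyIntegrable q volume) (hf : Integrable f volume)
    (hycont : Continuous y)
    (hgloc : LocallyIntegrable (fun t => q t * y t - f t) volume)
    (heq : ∀ a b : ℝ, y b - y a = ∫ t in a..b, (q t * y t - f t))
    (a b : ℝ) (hab : a ≤ b) :
    ∫ t in a..b, q t * |y t| ≤ |y b| - |y a| + ∫ t in a..b, |f t| := by
  have hqi : ∀ c d : ℝ, IntervalIntegrable q volume c d := fun c d =>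
    (hqloc.integrableOn_isCompact isCompact_uIcc).intervalIntegrable
  have hgi : ∀ c d : ℝ, IntervalIntegrable (fun t => q t * y t - f t) volume c d := fun c d =>
    (hgloc.integrableOn_isCompact isCompact_uIcc).intervalIntegrable
  have hfi : ∀ c d : ℝ, IntervalIntegrable (fun t => |f t|) volume c d := fun c d =>
    hf.abs.intervalIntegrable
  have hqyi : ∀ c d : ℝ, IntervalIntegrable (fun t => q t * |y t|) volume c d := fun c d =>
    ((hqloc.integrableOn_isCompact isCompact_uIcc).mul_continuousOn
      hycont.abs.continuousOn isCompact_uIcc).intervalIntegrable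
  rcases eq_or_lt_of_le hab with rfl | hab'
  · simp
  refine le_of_forall_eps fun ε hε => ?_
  obtain ⟨Q, hQdef⟩ : ∃ Q : ℝ, Q = ∫ t in a..b, q t := ⟨_, rfl⟩
  have hQ0 : 0 ≤ Q := hQdef ▸ intervalIntegral.integral_nonneg hab fun t _ => hq t
  obtain ⟨ε', hε'def⟩ : ∃ e : ℝ, e = ε / (2*(Q+1)) := ⟨_, rfl⟩
  have hε' : 0 < ε' := by rw [hε'def]; positivity
  -- uniform continuity
  have hu := (isCompact_Icc : IsCompact (Set.Icc a b)).uniformContinuousOn_of_continuous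
    hycont.continuousOn
  rw [Metric.uniformContinuousOn_iff] at hu
  obtain ⟨δ, hδ, hδ'⟩ := hu ε' hε'
  obtain ⟨n, hn⟩ := exists_nat_gt ((b - a)/δ)
  have hnpos : 0 < (n : ℝ) := lt_of_le_of_lt (div_nonneg (by linarith) hδ.le) hn
  have hh : 0 < (b - a)/n := div_pos (by linarith) hnpos
  have hhδ : (b - a)/n < δ := by
    rw [div_lt_iff₀ hnpos]
    have := (div_lt_iff₀ hδ).mp hn
    nlinarith
  obtain ⟨x, hx0, hxn, hxstep⟩ :
      ∃ x : ℕ → ℝ, x 0 = a ∧ x n = b ∧ ∀ i : ℕ, x (i+1) - x i = (b - a)/n := by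
    refine ⟨fun i => a + i * ((b - a)/n), by simp, ?_, fun i => by push_cast; ring⟩
    field_simp
    ring
  have hxle : ∀ i : ℕ, x i ≤ x (i+1) := fun i => by have := hxstep i; linarith
  have hxval : ∀ i : ℕ, x i = a + i * ((b - a)/n) := by
    intro i
    induction i with
    | zero => simpa using hx0
    | succ k ih => have := hxstep k; push_cast; push_cast at ih; linarith
  have hxmem : ∀ i : ℕ, i ≤ n → x i ∈ Set.Icc a b := by
    intro i hi
    rw [hxval i]
    constructor
    · have : 0 ≤ (i:ℝ) * ((b-a)/n) := by positivity
      linarith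
    · have h1 : (i : ℝ) * ((b-a)/n) ≤ (n : ℝ) * ((b-a)/n) :=
        mul_le_mul_of_nonneg_right (by exact_mod_cast hi) (le_of_lt hh)
      have h2 : (n:ℝ) * ((b-a)/n) = b - a := by field_simp
      linarith
  obtain ⟨F, hFdef⟩ : ∃ F : ℝ → ℝ, F = fun t => q t * |y t| - 2*ε'* q t - |f t| := ⟨_, rfl⟩
  have hFi : ∀ c d : ℝ, IntervalIntegrable F volume c d := fun c d => by
    rw [hFdef]
    exact ((hqyi c d).sub ((hqi c d).const_mul (2*ε'))).sub (hfi c d)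
  -- per-interval bound
  have hstep : ∀ k : ℕ, k < n →
      (∫ t in x k..x (k+1), F t) ≤ |y (x (k+1))| - |y (x k)| := by
    intro k hk
    obtain ⟨s, hs⟩ : ∃ s : ℝ, s = Real.sign (y (x k)) := ⟨_, rfl⟩
    have h1 : (∫ t in x k..x (k+1), F t) ≤ ∫ t in x k..x (k+1), s * (q t * y t - f t) := by
      apply intervalIntegral.integral_mono_on (hxle k) (hFi _ _) ((hgi _ _).const_mul s)
      intro t ht
      have htab : t ∈ Set.Icc a b :=
        ⟨le_trans (hxmem k (le_of_lt hk)).1 ht.1, le_trans ht.2 (hxmem (k+1) hk).2⟩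
      have hclose : |y t - y (x k)| ≤ ε' := by
        have hd : dist t (x k) < δ := by
          rw [Real.dist_eq, abs_of_nonneg (by linarith [ht.1])]
          have := hxstep k
          linarith [ht.2]
        have := hδ' t htab (x k) (hxmem k (le_of_lt hk)) hd
        rw [Real.dist_eq] at this
        exact le_of_lt this
      have hsy : |y t| - 2*ε' ≤ s * y t := by
        have h0 := sgn_aux (y (x k)) (y t)
        rw [← hs] at h0
        nlinarith [abs_nonneg (y t - y (x k))]
      have hsf : s * f t ≤ |f t| := hs ▸ sgn_mul_le_abs (y (x k)) (f t)
      have hmul : q t * (|y t| - 2*ε') ≤ q t * (s * y t) :=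
        mul_le_mul_of_nonneg_left hsy (hq t)
      have hrng : s * (q t * y t - f t) = q t * (s * y t) + -(s * f t) := by ring
      rw [hrng, hFdef]
      rw [mul_sub] at hmul
      ring_nf at hmul ⊢
      linarith [hmul, hsf]
    have h2 : (∫ t in x k..x (k+1), s * (q t * y t - f t))
        = s * (y (x (k+1)) - y (x k)) := by
      rw [intervalIntegral.integral_const_mul, ← heq (x k) (x (k+1))]
    have h3 : s * (y (x (k+1)) - y (x k)) ≤ |y (x (k+1))| - |y (x k)| := by
      have e1 : s * y (x k) = |y (x k)| := hs ▸ sgn_mul_self (y (x k))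
      have e2 : s * y (x (k+1)) ≤ |y (x (k+1))| := hs ▸ sgn_mul_le_abs (y (x k)) _
      nlinarith [e1, e2]
    rw [h2] at h1
    linarith
  -- sum up
  have hsum : (∫ t in a..b, F t) ≤ |y b| - |y a| := by
    have hadj := intervalIntegral.sum_integral_adjacent_intervals
      (μ := volume) (a := x) (n := n) (fun k _ => hFi (x k) (x (k+1)))
    rw [hx0, hxn] at hadj
    calc (∫ t in a..b, F t) = ∑ k ∈ Finset.range n, ∫ t in x k..x (k+1), F t := hadj.symm
      _ ≤ ∑ k ∈ Finset.range n, (|y (x (k+1))| - |y (x k)|) :=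
        Finset.sum_le_sum fun k hk => hstep k (Finset.mem_range.mp hk)
      _ = |y (x n)| - |y (x 0)| := Finset.sum_range_sub (fun i => |y (x i)|) n
      _ = |y b| - |y a| := by rw [hx0, hxn]
  -- expand ∫ F
  have hexp : (∫ t in a..b, F t)
      = (∫ t in a..b, q t * |y t|) - 2*ε'*Q - ∫ t in a..b, |f t| := by
    rw [hFdef, hQdef]
    rw [intervalIntegral.integral_sub (((hqyi a b).sub ((hqi a b).const_mul (2*ε'))))
        (hfi a b),
      intervalIntegral.integral_sub (hqyi a b) ((hqi a b).const_mul (2*ε')),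
      intervalIntegral.integral_const_mul]
  have h1 : (0:ℝ) < Q + 1 := by linarith
  have h2 : 2 * (ε / (2*(Q+1))) * Q = ε * Q / (Q + 1) := by field_simp
  have hQε : 2*ε'*Q ≤ ε := by
    rw [hε'def, h2, div_le_iff₀ h1]
    nlinarith
  rw [hexp] at hsum
  linarith

theorem stmt4 (q : ℝ → ℝ) (hq : ∀ x, 0 ≤ q x)
    (hqloc : LocallyIntegrable q volume)
    (a : ℝ) (ha : 0 < a) (hqa : 0 < ⨅ x : ℝ, ∫ t in x - a..x + a, q t)
    (f y : ℝ → ℝ) (hf : Integrable f volume)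
    (hy : IsSolution q f y) (hyL1 : Integrable y volume) :
    (∫⁻ x : ℝ, ENNReal.ofReal |q x * y x - f x|) +
      (∫⁻ x : ℝ, ENNReal.ofReal (q x * |y x|)) ≤
      3 * ∫⁻ x : ℝ, ENNReal.ofReal |f x| := by
  obtain ⟨hgloc, heq⟩ := hy
  -- continuity of y
  have hgi : ∀ c d : ℝ, IntervalIntegrable (fun t => q t * y t - f t) volume c d := fun c d =>
    (hgloc.integrableOn_isCompact isCompact_uIcc).intervalIntegrable
  have hycont : Continuous y := by
    have h0 : ∀ t, y t = y 0 + ∫ s in (0:ℝ)..t, (q s * y s - f s) := by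
      intro t; have := heq 0 t; linarith
    have : Continuous fun t => y 0 + ∫ s in (0:ℝ)..t, (q s * y s - f s) :=
      continuous_const.add (intervalIntegral.continuous_primitive (fun c d => hgi c d) 0)
    exact (funext h0 : y = _) ▸ this
  have hkey := key_interval q f y hq hqloc hf hycont hgloc heq
  -- F : total mass of f
  set Fm : ℝ≥0∞ := ∫⁻ x : ℝ, ENNReal.ofReal |f x| with hFm
  have hFmeq : Fm = ENNReal.ofReal (∫ x : ℝ, |f x|) := by
    rw [hFm, MeasureTheory.ofReal_integral_eq_lintegral_ofReal hf.abs
      (Eventually.of_forall fun x => abs_nonneg _)]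
  have hFmlt : Fm < ⊤ := by
    rw [hFmeq]; exact ENNReal.ofReal_lt_top
  -- existence of points with small |y|
  have hsmall : ∀ ε : ℝ, 0 < ε → ∀ R : ℝ, ∃ b : ℝ, R ≤ b ∧ |y b| < ε := by
    intro ε hε R
    by_contra hc
    push_neg at hc
    have hmono : ∫⁻ x in Set.Ici R, ENNReal.ofReal ε ≤ ∫⁻ x in Set.Ici R, ‖y x‖₊ := by
      refine setLIntegral_mono' measurableSet_Ici fun x hx => ?_
      rw [← enorm_eq_nnnorm, Real.enorm_eq_ofReal_abs]
      exact ENNReal.ofReal_le_ofReal (hc x hx)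
    rw [setLIntegral_const, Real.volume_Ici, ENNReal.mul_top
      (by simpa using (ENNReal.ofReal_pos.mpr hε).ne')] at hmono
    have hfin := hyL1.hasFiniteIntegral
    rw [HasFiniteIntegral] at hfin
    have : (⊤ : ℝ≥0∞) ≤ ∫⁻ x, ‖y x‖₊ := le_trans hmono (setLIntegral_le_lintegral _ _)
    exact absurd (lt_of_le_of_lt this hfin) (lt_irrefl _)
  -- integrability of q * |y| on compacts
  have hqyint : ∀ c d : ℝ, c ≤ d → IntegrableOn (fun t => q t * |y t|) (Set.Icc c d) volume :=
    fun c d _ => (hqloc.integrableOn_isCompact isCompact_Icc).mul_continuousOn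
      hycont.abs.continuousOn isCompact_Icc
  -- the key global bound K ≤ Fm
  have hK : (∫⁻ x : ℝ, ENNReal.ofReal (q x * |y x|)) ≤ Fm := by
    have hmeas : AEMeasurable (fun x : ℝ => ENNReal.ofReal (q x * |y x|)) volume :=
      ((hqloc.aestronglyMeasurable.aemeasurable).mul
        (hycont.abs.measurable.aemeasurable)).ennreal_ofReal
    -- exhaust ℝ by Icc (-n) n
    have hiSup : (∫⁻ x : ℝ, ENNReal.ofReal (q x * |y x|)) =
        ⨆ n : ℕ, ∫⁻ x in Set.Icc (-(n:ℝ)) n, ENNReal.ofReal (q x * |y x|) := by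
      have h1 : (fun x : ℝ => ENNReal.ofReal (q x * |y x|)) =
          fun x => ⨆ n : ℕ, (Set.Icc (-(n:ℝ)) n).indicator
            (fun x => ENNReal.ofReal (q x * |y x|)) x := by
        funext x
        refine le_antisymm ?_ (iSup_le fun n => Set.indicator_le_self _ _ x)
        refine le_iSup_of_le ⌈|x|⌉₊ ?_
        rw [Set.indicator_of_mem]
        constructor
        · have h2 : |x| ≤ (⌈|x|⌉₊ : ℝ) := Nat.le_ceil _
          have := neg_abs_le x
          linarith
        · have h2 : |x| ≤ (⌈|x|⌉₊ : ℝ) := Nat.le_ceil _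
          have := le_abs_self x
          linarith
      calc (∫⁻ x : ℝ, ENNReal.ofReal (q x * |y x|))
          = ∫⁻ x : ℝ, ⨆ n : ℕ, (Set.Icc (-(n:ℝ)) n).indicator
              (fun x => ENNReal.ofReal (q x * |y x|)) x :=
            lintegral_congr fun x => congrFun h1 x
        _ = ⨆ n : ℕ, ∫⁻ x : ℝ, (Set.Icc (-(n:ℝ)) n).indicator
              (fun x => ENNReal.ofReal (q x * |y x|)) x := by
            refine lintegral_iSup' (fun n => hmeas.indicator measurableSet_Icc) ?_
            refine Eventually.of_forall fun x => ?_
            intro m n hmn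
            exact Set.indicator_le_indicator_of_subset
              (Set.Icc_subset_Icc (by exact_mod_cast neg_le_neg (Nat.cast_le.mpr hmn))
                (by exact_mod_cast Nat.cast_le.mpr hmn)) (fun _ => zero_le) x
        _ = ⨆ n : ℕ, ∫⁻ x in Set.Icc (-(n:ℝ)) n, ENNReal.ofReal (q x * |y x|) :=
            iSup_congr fun n => lintegral_indicator measurableSet_Icc _
    rw [hiSup]
    refine iSup_le fun n => ?_
    -- per-n bound
    refine ENNReal.le_of_forall_pos_le_add fun ε hε _ => ?_
    obtain ⟨b₀, hb₀R, hb₀⟩ := hsmall ε (by exact_mod_cast hε) (max (n:ℝ) (-(n:ℝ)))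
    have hnb : (n : ℝ) ≤ b₀ := le_trans (le_max_left _ _) hb₀R
    have hnb' : -(n:ℝ) ≤ b₀ := le_trans (le_max_right _ _) hb₀R
    have hmono : (∫⁻ x in Set.Icc (-(n:ℝ)) n, ENNReal.ofReal (q x * |y x|)) ≤
        ∫⁻ x in Set.Icc (-(n:ℝ)) b₀, ENNReal.ofReal (q x * |y x|) :=
      lintegral_mono_set (Set.Icc_subset_Icc_right hnb)
    have heq2 : (∫⁻ x in Set.Icc (-(n:ℝ)) b₀, ENNReal.ofReal (q x * |y x|)) =
        ENNReal.ofReal (∫ x in Set.Icc (-(n:ℝ)) b₀, q x * |y x|) := by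
      rw [MeasureTheory.ofReal_integral_eq_lintegral_ofReal (hqyint _ _ hnb')
        (Eventually.of_forall fun x => mul_nonneg (hq x) (abs_nonneg _))]
    have heq3 : (∫ x in Set.Icc (-(n:ℝ)) b₀, q x * |y x|) =
        ∫ t in (-(n:ℝ))..b₀, q t * |y t| := by
      rw [intervalIntegral.integral_of_le hnb', MeasureTheory.integral_Icc_eq_integral_Ioc]
    have hfbound : (∫ t in (-(n:ℝ))..b₀, |f t|) ≤ ∫ x : ℝ, |f x| := by
      rw [intervalIntegral.integral_of_le hnb']
      exact setIntegral_le_integral hf.abs (Eventually.of_forall fun x => abs_nonneg _)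
    have hmain : (∫ t in (-(n:ℝ))..b₀, q t * |y t|) ≤ ε + ∫ x : ℝ, |f x| := by
      have := hkey (-(n:ℝ)) b₀ hnb'
      have hy0 : 0 ≤ |y (-(n:ℝ))| := abs_nonneg _
      linarith [hb₀.le]
    calc (∫⁻ x in Set.Icc (-(n:ℝ)) n, ENNReal.ofReal (q x * |y x|))
        ≤ ENNReal.ofReal (∫ t in (-(n:ℝ))..b₀, q t * |y t|) := by
          rw [← heq3, ← heq2]; exact hmono
      _ ≤ ENNReal.ofReal (ε + ∫ x : ℝ, |f x|) := ENNReal.ofReal_le_ofReal hmain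
      _ ≤ Fm + ε := by
          rw [ENNReal.ofReal_add (by exact_mod_cast hε.le)
            (integral_nonneg fun x => abs_nonneg _), hFmeq]
          rw [add_comm]
          exact add_le_add le_rfl (by simp)
  -- first term bound
  have hG : (∫⁻ x : ℝ, ENNReal.ofReal |q x * y x - f x|) ≤
      (∫⁻ x : ℝ, ENNReal.ofReal (q x * |y x|)) + Fm := by
    have hmeas : AEMeasurable (fun x : ℝ => ENNReal.ofReal (q x * |y x|)) volume :=
      ((hqloc.aestronglyMeasurable.aemeasurable).mul
        (hycont.abs.measurable.aemeasurable)).ennreal_ofReal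
    calc (∫⁻ x : ℝ, ENNReal.ofReal |q x * y x - f x|)
        ≤ ∫⁻ x : ℝ, (ENNReal.ofReal (q x * |y x|) + ENNReal.ofReal |f x|) := by
          refine lintegral_mono fun x => ?_
          calc ENNReal.ofReal |q x * y x - f x|
              ≤ ENNReal.ofReal (q x * |y x| + |f x|) := by
                refine ENNReal.ofReal_le_ofReal ?_
                have h1 : |q x * y x - f x| ≤ |q x * y x| + |f x| := abs_sub _ _
                rwa [abs_mul, abs_of_nonneg (hq x)] at h1
            _ ≤ ENNReal.ofReal (q x * |y x|) + ENNReal.ofReal |f x| :=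
                ENNReal.ofReal_add_le
      _ = (∫⁻ x : ℝ, ENNReal.ofReal (q x * |y x|)) + Fm := lintegral_add_left' hmeas _
  -- assemble
  calc (∫⁻ x : ℝ, ENNReal.ofReal |q x * y x - f x|) +
        (∫⁻ x : ℝ, ENNReal.ofReal (q x * |y x|))
      ≤ ((∫⁻ x : ℝ, ENNReal.ofReal (q x * |y x|)) + Fm) +
        (∫⁻ x : ℝ, ENNReal.ofReal (q x * |y x|)) := add_le_add hG le_rfl
    _ ≤ (Fm + Fm) + Fm := add_le_add (add_le_add hK le_rfl) hK
    _ = 3 * Fm := by ring
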